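/- arXiv:1103.1408 — 4 statements merged into one kernel-verified Lean document; each statement's English description precedes it below -/
import Mathlib

section
/- For all α, β, γ, δ ∈ ℝ and all a₀, a₁ ∈ ℝ with a₀ ≠ 0 and a₀² ≠ 1, there exists exactly one formal power series y ∈ ℝ[[X]] with coeff₀(y) = a₀ and coeff₁(y) = a₁ satisfying the shifted PVI equation E(X − 1, y, Dy, D(Dy)) = 0 in ℝ[[X]]. -/
/-- Formal derivative of a power series, defined coefficientwise:
the coefficient of `X^n` in `D f` is `(n+1) * coeff (n+1) f`. -/
noncomputable def D (f : PowerSeries ℝ) : PowerSeries ℝ :=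
  PowerSeries.mk fun n => ((n : ℝ) + 1) * PowerSeries.coeff (n + 1) f

/-- The Painlevé VI expression `E(X - 1, y, Dy, D(Dy))`, i.e. PVI shifted to be
centered at `x = -1`, as a formal power series. -/
noncomputable def Esh (α β γ δ : ℝ) (y : PowerSeries ℝ) : PowerSeries ℝ :=
  let x : PowerSeries ℝ := PowerSeries.X - 1
  let p : PowerSeries ℝ := D y
  let q : PowerSeries ℝ := D (D y)
  2*x^2*y*(x-1)^2*(y-1)*(y-x)*q
    - x^2*(x-1)^2*(3*y^2 - 2*(1+x)*y + x)*p^2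
    + 2*x*y*(x-1)*(y-1)*((2*x-1)*y + x^2)*p
    - 2*(PowerSeries.C α * y^2*(y-1)^2*(y-x)^2
        + PowerSeries.C β * x*(y-1)^2*(y-x)^2
        + PowerSeries.C γ * y^2*(x-1)*(y-x)^2
        + PowerSeries.C δ * x*y^2*(x-1)*(y-1)^2)

open PowerSeries

lemma coeff_D (f : PowerSeries ℝ) (n : ℕ) :
    coeff n (D f) = ((n : ℝ) + 1) * coeff (n + 1) f := coeff_mk n _

lemma D_sub (f g : PowerSeries ℝ) : D (f - g) = D f - D g := by
  ext n
  simp only [coeff_D, map_sub]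
  ring

lemma D_add (f g : PowerSeries ℝ) : D (f + g) = D f + D g := by
  ext n
  simp only [coeff_D, map_add]
  ring

lemma Esh_eq (α β γ δ : ℝ) (y : PowerSeries ℝ) :
    Esh α β γ δ y =
      2*(X-1)^2*y*((X-1)-1)^2*(y-1)*(y-(X-1))*(D (D y))
        - (X-1)^2*((X-1)-1)^2*(3*y^2 - 2*(1+(X-1))*y + (X-1))*(D y)^2
        + 2*(X-1)*y*((X-1)-1)*(y-1)*((2*(X-1)-1)*y + (X-1)^2)*(D y)
        - 2*(PowerSeries.C α * y^2*(y-1)^2*(y-(X-1))^2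
            + PowerSeries.C β * (X-1)*(y-1)^2*(y-(X-1))^2
            + PowerSeries.C γ * y^2*((X-1)-1)*(y-(X-1))^2
            + PowerSeries.C δ * (X-1)*y^2*((X-1)-1)*(y-1)^2) := rfl

/-- Truncation of `y` keeping coefficients `0,…,n+1`. -/
noncomputable def trunc2 (n : ℕ) (y : PowerSeries ℝ) : PowerSeries ℝ :=
  PowerSeries.mk fun k => if k ≤ n + 1 then coeff k y else 0

/-- Key lemma: the `n`-th coefficient of `Esh y` splits into a part depending only on
the coefficients of `y` up to `n+1`, plus a nonzero multiple of `coeff (n+2) y`. -/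
lemma key (α β γ δ : ℝ) (y : PowerSeries ℝ) (n : ℕ) :
    coeff n (Esh α β γ δ y) =
      coeff n (Esh α β γ δ (trunc2 n y))
        + 8 * (coeff 0 y) * ((coeff 0 y)^2 - 1) * ((n : ℝ)+1) * ((n : ℝ)+2)
          * coeff (n+2) y := by
  set T : PowerSeries ℝ := trunc2 n y with hT
  set R : PowerSeries ℝ := y - T with hRdef
  have hTc : ∀ k, coeff k T = if k ≤ n + 1 then coeff k y else 0 := by
    intro k; simp [hT, trunc2]
  have hRc : ∀ k, k < n + 2 → coeff k R = 0 := by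
    intro k hk
    simp only [hRdef, map_sub, hTc, if_pos (by omega : k ≤ n + 1), sub_self]
  have hRn2 : coeff (n+2) R = coeff (n+2) y := by
    simp only [hRdef, map_sub, hTc, if_neg (by omega : ¬ (n+2 ≤ n+1)), sub_zero]
  have hRd : (X : PowerSeries ℝ)^(n+1) ∣ R :=
    X_pow_dvd_iff.mpr fun m hm => hRc m (by omega)
  have hDRd : (X : PowerSeries ℝ)^(n+1) ∣ D R := by
    refine X_pow_dvd_iff.mpr fun m hm => ?_
    rw [coeff_D, hRc (m+1) (by omega), mul_zero]
  have hDDRc : ∀ k, k < n → coeff k (D (D R)) = 0 := by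
    intro k hk
    rw [coeff_D, coeff_D, hRc (k+1+1) (by omega)]
    ring
  have hDDRn : coeff n (D (D R)) = ((n:ℝ)+1) * (((n:ℝ)+2) * coeff (n+2) y) := by
    rw [coeff_D, coeff_D, hRn2]
    push_cast
    ring
  have hy : y = T + R := by rw [hRdef]; ring
  have hDy : D y = D T + D R := by
    rw [hRdef, D_sub]; ring
  have hDDy : D (D y) = D (D T) + D (D R) := by
    rw [hDy, D_add]
  -- abbreviations
  set x : PowerSeries ℝ := X - 1 with hx
  set U : PowerSeries ℝ := 2*x^2*T*(x-1)^2*(T-1)*(T-x) with hU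
  -- the main algebraic identity
  have main : Esh α β γ δ y - Esh α β γ δ T - U * (D (D R)) =
      R * (2*x^2*(x-1)^2*((T+R)^2+(T+R)*T+T^2-(1+x)*((T+R)+T)+x)*(D (D T) + D (D R))
          - x^2*(x-1)^2*(3*((T+R)+T)-2*(1+x))*(D T + D R)^2
          + 2*x*(x-1)*((2*x-1)*((T+R)^2+(T+R)*T+T^2)+(x-1)^2*((T+R)+T)-x^2)*(D T + D R)
          - 2*(PowerSeries.C α *((T+R)^2+(T+R)*T+T^2-(1+x)*((T+R)+T)+x)
                  *((T+R)*((T+R)-1)*((T+R)-x)+T*(T-1)*(T-x))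
              + PowerSeries.C β * x*((T+R)+T-1-x)*(((T+R)-1)*((T+R)-x)+(T-1)*(T-x))
              + PowerSeries.C γ *(x-1)*((T+R)+T-x)*((T+R)*((T+R)-x)+T*(T-x))
              + PowerSeries.C δ * x*(x-1)*((T+R)+T-1)*((T+R)*((T+R)-1)+T*(T-1))))
      + (D R) * (-(x^2)*(x-1)^2*(3*T^2-2*(1+x)*T+x)*((D T + D R) + D T)
          + 2*x*(x-1)*T*(T-1)*((2*x-1)*T+x^2)) := by
    rw [Esh_eq, Esh_eq, hU, hDDy, hDy, hy, hx]
    ring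
  have hdvd : (X : PowerSeries ℝ)^(n+1) ∣ Esh α β γ δ y - Esh α β γ δ T - U * (D (D R)) := by
    rw [main]
    exact dvd_add (hRd.mul_right _) (hDRd.mul_right _)
  have hco : coeff n (Esh α β γ δ y - Esh α β γ δ T - U * (D (D R))) = 0 :=
    X_pow_dvd_iff.mp hdvd n (by omega)
  have hUDDR : coeff n (U * D (D R)) =
      coeff 0 U * coeff n (D (D R)) := by
    rw [coeff_mul]
    refine Finset.sum_eq_single_of_mem ((0:ℕ), n)
      (Finset.HasAntidiagonal.mem_antidiagonal.mpr (zero_add n)) ?_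
    intro b hb hbne
    have hb' : b.1 + b.2 = n := Finset.HasAntidiagonal.mem_antidiagonal.mp hb
    have hb2 : b.2 < n := by
      rcases Nat.eq_zero_or_pos b.1 with h | h
      · exfalso; apply hbne; ext <;> omega
      · omega
    rw [hDDRc b.2 hb2, mul_zero]
  have hU0 : coeff 0 U = 8 * (coeff 0 y) * ((coeff 0 y)^2 - 1) := by
    have h0T : (constantCoeff) T = coeff 0 y := by
      rw [← coeff_zero_eq_constantCoeff, hTc 0, if_pos (by omega)]
    rw [coeff_zero_eq_constantCoeff, hU, hx]
    simp only [map_mul, map_sub, map_pow, map_one, constantCoeff_X, h0T]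
    rw [map_ofNat]
    simp only [coeff_zero_eq_constantCoeff]
    ring
  have := hco
  rw [map_sub, map_sub, hUDDR, hU0, hDDRn] at this
  linear_combination this

/-- The coefficients of the solution, defined by recursion. -/
noncomputable def pviCoeff (α β γ δ a₀ a₁ : ℝ) : ℕ → ℝ
  | 0 => a₀
  | 1 => a₁
  | (n+2) =>
    - (PowerSeries.coeff n (Esh α β γ δ (PowerSeries.mk fun k =>
        if _ : k ≤ n + 1 then pviCoeff α β γ δ a₀ a₁ k else 0)))
      / (8 * a₀ * (a₀^2 - 1) * ((n:ℝ)+1) * ((n:ℝ)+2))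

lemma c_ne_zero {a₀ : ℝ} (h₀ : a₀ ≠ 0) (h₁ : a₀ ^ 2 ≠ 1) (n : ℕ) :
    8 * a₀ * (a₀^2 - 1) * ((n:ℝ)+1) * ((n:ℝ)+2) ≠ 0 := by
  have h2 : (a₀^2 - 1 : ℝ) ≠ 0 := sub_ne_zero.mpr h₁
  positivity

lemma unique_aux (α β γ δ a₀ : ℝ) (h₀ : a₀ ≠ 0) (h₁ : a₀ ^ 2 ≠ 1)
    (y z : PowerSeries ℝ)
    (hy0 : coeff 0 y = a₀) (hz0 : coeff 0 z = a₀)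
    (hy1 : coeff 1 y = coeff 1 z)
    (hEy : Esh α β γ δ y = 0) (hEz : Esh α β γ δ z = 0) : y = z := by
  have H : ∀ n, coeff n y = coeff n z := by
    intro n
    induction n using Nat.strong_induction_on with
    | _ n ih =>
      match n with
      | 0 => rw [hy0, hz0]
      | 1 => exact hy1
      | (m+2) =>
        have hTeq : trunc2 m y = trunc2 m z := by
          ext k
          simp only [trunc2, coeff_mk]
          split
          · exact ih k (by omega)
          · rfl
        have ky := key α β γ δ y m
        have kz := key α β γ δ z m
        rw [hEy, map_zero, hy0] at ky
        rw [hEz, map_zero, hz0, ← hTeq] at kz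
        have hc := c_ne_zero h₀ h₁ m
        have : (8 * a₀ * (a₀^2 - 1) * ((m:ℝ)+1) * ((m:ℝ)+2)) * coeff (m+2) y
            = (8 * a₀ * (a₀^2 - 1) * ((m:ℝ)+1) * ((m:ℝ)+2)) * coeff (m+2) z := by
          linear_combination kz - ky
        exact mul_left_cancel₀ hc this
  exact PowerSeries.ext H

theorem shifted_PVI_existsUnique (α β γ δ a₀ a₁ : ℝ) (h₀ : a₀ ≠ 0) (h₁ : a₀ ^ 2 ≠ 1) :
    ∃! y : PowerSeries ℝ,
      PowerSeries.coeff 0 y = a₀ ∧ PowerSeries.coeff 1 y = a₁ ∧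
        Esh α β γ δ y = 0 := by
  set y : PowerSeries ℝ := PowerSeries.mk (pviCoeff α β γ δ a₀ a₁) with hy
  have hc0 : coeff 0 y = a₀ := by rw [hy, coeff_mk, pviCoeff]
  have hc1 : coeff 1 y = a₁ := by rw [hy, coeff_mk, pviCoeff]
  have hTrunc : ∀ n : ℕ, trunc2 n y = PowerSeries.mk fun k =>
      if _ : k ≤ n + 1 then pviCoeff α β γ δ a₀ a₁ k else 0 := by
    intro n
    ext k
    simp only [trunc2, coeff_mk, hy]
    split <;> simp_all
  have hE : Esh α β γ δ y = 0 := by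
    ext n
    rw [map_zero]
    have hk := key α β γ δ y n
    rw [hc0, hTrunc n] at hk
    have hrec : coeff (n+2) y =
        - (coeff n (Esh α β γ δ (PowerSeries.mk fun k =>
            if _ : k ≤ n + 1 then pviCoeff α β γ δ a₀ a₁ k else 0)))
          / (8 * a₀ * (a₀^2 - 1) * ((n:ℝ)+1) * ((n:ℝ)+2)) := by
      rw [hy, coeff_mk, pviCoeff]
    rw [hrec] at hk
    have hc := c_ne_zero h₀ h₁ n
    rw [hk, mul_div_assoc', mul_div_cancel_left₀ _ hc]
    ring
  refine ⟨y, ⟨hc0, hc1, hE⟩, ?_⟩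
  rintro z ⟨hz0, hz1, hzE⟩
  exact unique_aux α β γ δ a₀ h₀ h₁ z y hz0 hc0 (by rw [hz1, hc1]) hzE hE
end

section
/- Fix α, β, γ, δ ∈ ℝ and i ∈ ℕ, and for y ∈ ℝ[[X]] write E_sh(y) := E(X − 1, y, Dy, D(Dy)) ∈ ℝ[[X]]. Then: (i) if y, ỹ ∈ ℝ[[X]] satisfy coeff_m(y) = coeff_m(ỹ) for all m ≤ i + 2, then coeff_i(E_sh(y)) = coeff_i(E_sh(ỹ)); and (ii) if y, ỹ ∈ ℝ[[X]] satisfy coeff_m(y) = coeff_m(ỹ) for all m ≠ i + 2, then coeff_i(E_sh(y)) − coeff_i(E_sh(ỹ)) = 8·a₀·(i+2)·(i+1)·(a₀² − 1)·(coeff_{i+2}(y) − coeff_{i+2}(ỹ)), where a₀ = coeff₀(y). In particular, when a₀ ≠ 0 and a₀² ≠ 1, the coefficient equation of order i determines coeff_{i+2}(y) uniquely from coeff₀(y), …, coeff_{i+1}(y). -/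
open PowerSeries

lemma D_CX (a : ℝ) (n : ℕ) :
    D (C a * X ^ (n + 1)) = C (((n : ℝ) + 1) * a) * X ^ n := by
  ext m
  simp only [coeff_D, coeff_C_mul, coeff_X_pow]
  by_cases h : m = n
  · subst h; simp
  · have h2 : ¬ (m + 1 = n + 1) := by omega
    simp [h, h2]

lemma X_pow_dvd_D {n : ℕ} {f : PowerSeries ℝ} (h : X ^ (n + 1) ∣ f) : X ^ n ∣ D f := by
  rw [X_pow_dvd_iff] at h ⊢
  intro m hm
  rw [coeff_D, h (m + 1) (by omega), mul_zero]

/-- Key homomorphism lemma: perturbing the second derivative by `s`. -/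
lemma Esh_hom (α β γ δ : ℝ) {S : Type} [CommRing S] (φ : PowerSeries ℝ →+* S)
    (y y' s : PowerSeries ℝ) (hy : φ y = φ y') (hp : φ (D y) = φ (D y'))
    (hq : φ (D (D y)) = φ (D (D y')) + φ s) :
    φ (Esh α β γ δ y) = φ (Esh α β γ δ y')
      + φ (2*(X-1)^2*y'*((X-1)-1)^2*(y'-1)*(y'-(X-1))) * φ s := by
  simp only [Esh]
  simp only [map_mul, map_sub, map_add, map_pow, map_one, map_ofNat]
  rw [hy, hp, hq]
  ring

theorem shifted_PVI_coeff_dependence (α β γ δ : ℝ) (i : ℕ) :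
    (∀ y y' : PowerSeries ℝ,
        (∀ m : ℕ, m ≤ i + 2 → PowerSeries.coeff m y = PowerSeries.coeff m y') →
        PowerSeries.coeff i (Esh α β γ δ y) = PowerSeries.coeff i (Esh α β γ δ y')) ∧
    (∀ y y' : PowerSeries ℝ,
        (∀ m : ℕ, m ≠ i + 2 → PowerSeries.coeff m y = PowerSeries.coeff m y') →
        PowerSeries.coeff i (Esh α β γ δ y) - PowerSeries.coeff i (Esh α β γ δ y') =
          8 * PowerSeries.coeff 0 y * ((i : ℝ) + 2) * ((i : ℝ) + 1)
            * ((PowerSeries.coeff 0 y) ^ 2 - 1)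
            * (PowerSeries.coeff (i + 2) y - PowerSeries.coeff (i + 2) y')) := by
  set I : Ideal (PowerSeries ℝ) := Ideal.span {X ^ (i + 1)} with hI
  set φ := Ideal.Quotient.mk I with hφ
  have key : ∀ f g : PowerSeries ℝ, φ f = φ g → coeff i f = coeff i g := by
    intro f g h
    rw [Ideal.Quotient.eq, hI, Ideal.mem_span_singleton, X_pow_dvd_iff] at h
    have := h i (by omega)
    rw [map_sub] at this
    linarith
  constructor
  · -- Part (i)
    intro y y' hyy
    have hdvd : X ^ (i + 3) ∣ y - y' := by
      rw [X_pow_dvd_iff]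
      intro m hm
      rw [map_sub, hyy m (by omega), sub_self]
    have hDsub : ∀ f g : PowerSeries ℝ, D (f - g) = D f - D g := by
      intro f g; ext n; simp [coeff_D, mul_sub]
    have hmem : ∀ f g : PowerSeries ℝ, X ^ (i + 1) ∣ f - g → φ f = φ g := by
      intro f g h
      rw [Ideal.Quotient.eq, hI, Ideal.mem_span_singleton]
      exact h
    have hy : φ y = φ y' := hmem _ _ ((pow_dvd_pow X (by omega)).trans hdvd)
    have hp : φ (D y) = φ (D y') := by
      apply hmem
      rw [← hDsub]
      exact X_pow_dvd_D ((pow_dvd_pow X (by omega)).trans hdvd)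
    have hq : φ (D (D y)) = φ (D (D y')) + φ 0 := by
      rw [map_zero, add_zero]
      apply hmem
      rw [← hDsub, ← hDsub]
      exact X_pow_dvd_D (X_pow_dvd_D (by simpa using hdvd))
    have := Esh_hom α β γ δ φ y y' 0 hy hp hq
    rw [map_zero, mul_zero, add_zero] at this
    exact key _ _ this
  · -- Part (ii)
    intro y y' hyy
    set c : ℝ := coeff (i + 2) y - coeff (i + 2) y' with hc
    have hy2 : y = y' + C c * X ^ (i + 2) := by
      ext m
      rw [map_add, coeff_C_mul, coeff_X_pow]
      by_cases h : m = i + 2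
      · subst h; simp [hc]
      · rw [hyy m h]; simp [h]
    have hDy : D y = D y' + C (((i : ℝ) + 2) * c) * X ^ (i + 1) := by
      rw [hy2, D_add]
      have : (i + 2 : ℕ) = (i + 1) + 1 := rfl
      rw [this, D_CX]
      have harg : ((↑(i + 1) : ℝ) + 1) * c = ((i : ℝ) + 2) * c := by push_cast; ring
      rw [harg]
    have hDDy : D (D y) = D (D y') + C (((i : ℝ) + 1) * (((i : ℝ) + 2) * c)) * X ^ i := by
      rw [hDy, D_add]
      have : (i + 1 : ℕ) = i + 1 := rfl
      rw [D_CX]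
    have hy' : φ y = φ y' := by
      rw [Ideal.Quotient.eq, hI, Ideal.mem_span_singleton]
      rw [hy2]
      exact ⟨C c * X, by rw [pow_succ]; ring⟩
    have hp : φ (D y) = φ (D y') := by
      rw [Ideal.Quotient.eq, hI, Ideal.mem_span_singleton]
      rw [hDy]
      exact ⟨C (((i : ℝ) + 2) * c), by ring⟩
    have hq : φ (D (D y)) = φ (D (D y'))
        + φ (C (((i : ℝ) + 1) * (((i : ℝ) + 2) * c)) * X ^ i) := by
      rw [← map_add, hDDy]
    have := Esh_hom α β γ δ φ y y' _ hy' hp hq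
    rw [← map_mul, ← map_add] at this
    have hco := key _ _ this
    rw [map_add] at hco
    set W : PowerSeries ℝ := 2*(X-1)^2*y'*((X-1)-1)^2*(y'-1)*(y'-(X-1)) with hW
    have hWc : coeff i (W * (C (((i : ℝ) + 1) * (((i : ℝ) + 2) * c)) * X ^ i))
        = (((i : ℝ) + 1) * (((i : ℝ) + 2) * c)) * constantCoeff W := by
      have : W * (C (((i : ℝ) + 1) * (((i : ℝ) + 2) * c)) * X ^ i)
          = (C (((i : ℝ) + 1) * (((i : ℝ) + 2) * c)) * W) * X ^ i := by ring
      rw [this]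
      have h2 := coeff_mul_X_pow (C (((i : ℝ) + 1) * (((i : ℝ) + 2) * c)) * W) i 0
      rw [zero_add] at h2
      rw [h2, coeff_C_mul, coeff_zero_eq_constantCoeff]
    have hWconst : constantCoeff W = 8 * (constantCoeff y') * ((constantCoeff y')^2 - 1) := by
      rw [hW]
      simp only [map_mul, map_sub, map_pow, map_one, map_ofNat, constantCoeff_X]
      ring
    have h0 : coeff 0 y = coeff 0 y' := hyy 0 (by omega)
    rw [hco, hWc, hWconst]
    rw [h0, coeff_zero_eq_constantCoeff]
    ring
end

section
/- Prandtl's boundary-layer momentum equation u·∂ₓu + v·∂_yu + ∂_tu = ∂_tS(Û) + S(Û)·∂ₓS(Û) + ν·∂_y∂_yu holds in MvPowerSeries (Fin 3) ℝ if and only if for all i,k ∈ ℕ the following three families of equations hold: (j = 0): 0 = (k+1)·U(i,k+1) + Σ_{p=0}^{i} Σ_{q=0}^{k} (i−p+1)·U(p,q)·U(i−p+1,k−q) + 2ν·A(i,2,k); (j = 1): (k+1)·A(i,1,k+1) + Σ_{p=0}^{i} Σ_{r=0}^{k} B(p,1,r)·A(i−p,1,k−r) = 6ν·A(i,3,k);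 and for every j ≥ 2: (k+1)·A(i,j,k+1) + Σ_{p=0}^{i} Σ_{q=1}^{j−1} Σ_{r=0}^{k} (i−p+1)·A(p,q,r)·A(i−p+1,j−q,k−r) + Σ_{p=0}^{i} Σ_{q=1}^{j} Σ_{r=0}^{k} (j−q+1)·B(p,q,r)·A(i−p,j−q+1,k−r) = ν·(j+1)(j+2)·A(i,j+2,k). -/
/-- `S A` is the formal power series in the three variables x, y, t whose coefficient of
`x^i y^j t^k` is `A i j k`. -/
noncomputable def S (A : ℕ → ℕ → ℕ → ℝ) : MvPowerSeries (Fin 3) ℝ :=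
  fun m => A (m 0) (m 1) (m 2)

/-- The family of coefficients of the formal partial derivative in x. -/
noncomputable def dx (A : ℕ → ℕ → ℕ → ℝ) : ℕ → ℕ → ℕ → ℝ :=
  fun i j k => ((i : ℝ) + 1) * A (i + 1) j k

/-- The family of coefficients of the formal partial derivative in y. -/
noncomputable def dy (A : ℕ → ℕ → ℕ → ℝ) : ℕ → ℕ → ℕ → ℝ :=
  fun i j k => ((j : ℝ) + 1) * A i (j + 1) k

/-- The family of coefficients of the formal partial derivative in t. -/
noncomputable def dt (A : ℕ → ℕ → ℕ → ℝ) : ℕ → ℕ → ℕ → ℝ :=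
  fun i j k => ((k : ℝ) + 1) * A i j (k + 1)

/-- The external-flow coefficient family `Û`, with `Û i 0 k = U i k` and `Û i j k = 0`
for `j ≥ 1`. -/
noncomputable def Uhat (U : ℕ → ℕ → ℝ) : ℕ → ℕ → ℕ → ℝ :=
  fun i j k => if j = 0 then U i k else 0


open Finset

noncomputable def fs (p q r : ℕ) : Fin 3 →₀ ℕ := Finsupp.equivFunOnFinite.symm ![p, q, r]

lemma fs0 (p q r : ℕ) : fs p q r 0 = p := rfl
lemma fs1 (p q r : ℕ) : fs p q r 1 = q := rfl
lemma fs2 (p q r : ℕ) : fs p q r 2 = r := rfl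

lemma fs_eq (m : Fin 3 →₀ ℕ) : fs (m 0) (m 1) (m 2) = m := by
  ext x; fin_cases x <;> rfl

lemma coeff_S (A : ℕ → ℕ → ℕ → ℝ) (m : Fin 3 →₀ ℕ) :
    MvPowerSeries.coeff m (S A) = A (m 0) (m 1) (m 2) := rfl

lemma coeff_S_mul (A B : ℕ → ℕ → ℕ → ℝ) (m : Fin 3 →₀ ℕ) :
    MvPowerSeries.coeff m (S A * S B) =
      ∑ p ∈ range (m 0 + 1), ∑ q ∈ range (m 1 + 1), ∑ r ∈ range (m 2 + 1),
        A p q r * B (m 0 - p) (m 1 - q) (m 2 - r) := by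
  rw [MvPowerSeries.coeff_mul]
  have : ∑ p ∈ range (m 0 + 1), ∑ q ∈ range (m 1 + 1), ∑ r ∈ range (m 2 + 1),
      A p q r * B (m 0 - p) (m 1 - q) (m 2 - r)
      = ∑ x ∈ range (m 0 + 1) ×ˢ (range (m 1 + 1) ×ˢ range (m 2 + 1)),
        A x.1 x.2.1 x.2.2 * B (m 0 - x.1) (m 1 - x.2.1) (m 2 - x.2.2) := by
    rw [Finset.sum_product]
    exact Finset.sum_congr rfl fun p _ => by rw [Finset.sum_product]
  rw [this]
  apply Finset.sum_nbij' (i := fun ab => (ab.1 0, ab.1 1, ab.1 2))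
    (j := fun x => (fs x.1 x.2.1 x.2.2, m - fs x.1 x.2.1 x.2.2))
  · intro ab hab
    rw [Finset.HasAntidiagonal.mem_antidiagonal] at hab
    simp only [Finset.mem_product, Finset.mem_range]
    have h0 : ab.1 0 + ab.2 0 = m 0 := by rw [← hab]; rfl
    have h1 : ab.1 1 + ab.2 1 = m 1 := by rw [← hab]; rfl
    have h2 : ab.1 2 + ab.2 2 = m 2 := by rw [← hab]; rfl
    omega
  · intro x hx
    rw [Finset.HasAntidiagonal.mem_antidiagonal]
    simp only [Finset.mem_product, Finset.mem_range] at hx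
    have hle : fs x.1 x.2.1 x.2.2 ≤ m := by
      intro a; fin_cases a
      · simpa [fs0] using Nat.lt_succ_iff.mp hx.1
      · simpa [fs1] using Nat.lt_succ_iff.mp hx.2.1
      · simpa [fs2] using Nat.lt_succ_iff.mp hx.2.2
    exact add_tsub_cancel_of_le hle
  · intro ab hab
    rw [Finset.HasAntidiagonal.mem_antidiagonal] at hab
    have h1 : fs (ab.1 0) (ab.1 1) (ab.1 2) = ab.1 := fs_eq _
    rw [h1]
    have : m - ab.1 = ab.2 := by rw [← hab]; simp
    rw [this]
  · intro x hx
    simp [fs0, fs1, fs2]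
  · intro ab hab
    rw [Finset.HasAntidiagonal.mem_antidiagonal] at hab
    have h0 : ab.1 0 + ab.2 0 = m 0 := by rw [← hab]; rfl
    have h1 : ab.1 1 + ab.2 1 = m 1 := by rw [← hab]; rfl
    have h2 : ab.1 2 + ab.2 2 = m 2 := by rw [← hab]; rfl
    have : (m - ab.1) = ab.2 := by rw [← hab]; simp
    simp only [coeff_S]
    congr 1
    congr 1 <;> omega

/-- coefficientwise formulation -/
def Eq3 (ν : ℝ) (U : ℕ → ℕ → ℝ) (A B : ℕ → ℕ → ℕ → ℝ) (i j k : ℕ) : Prop :=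
  (∑ p ∈ range (i + 1), ∑ q ∈ range (j + 1), ∑ r ∈ range (k + 1),
      A p q r * dx A (i - p) (j - q) (k - r))
  + (∑ p ∈ range (i + 1), ∑ q ∈ range (j + 1), ∑ r ∈ range (k + 1),
      B p q r * dy A (i - p) (j - q) (k - r))
  + dt A i j k
  = dt (Uhat U) i j k
    + (∑ p ∈ range (i + 1), ∑ q ∈ range (j + 1), ∑ r ∈ range (k + 1),
        Uhat U p q r * dx (Uhat U) (i - p) (j - q) (k - r))
    + ν * dy (dy A) i j k

lemma series_iff (ν : ℝ) (U : ℕ → ℕ → ℝ) (A B : ℕ → ℕ → ℕ → ℝ) :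
    (S A * S (dx A) + S B * S (dy A) + S (dt A) =
        S (dt (Uhat U)) + S (Uhat U) * S (dx (Uhat U)) + ν • S (dy (dy A))) ↔
      ∀ i j k : ℕ, Eq3 ν U A B i j k := by
  constructor
  · intro h i j k
    have := congrArg (MvPowerSeries.coeff (fs i j k)) h
    simpa [map_add, coeff_S_mul, coeff_S, fs0, fs1, fs2, MvPowerSeries.coeff_smul, Eq3] using this
  · intro h
    ext m
    have := h (m 0) (m 1) (m 2)
    simpa [map_add, coeff_S_mul, coeff_S, MvPowerSeries.coeff_smul, Eq3] using this

lemma sum_Icc1 {j : ℕ} (f : ℕ → ℝ) (h0 : f 0 = 0) :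
    ∑ q ∈ range (j + 1), f q = ∑ q ∈ Icc 1 j, f q := by
  refine (Finset.sum_subset (fun x hx => ?_) (fun x hx hx' => ?_)).symm
  · simp only [mem_Icc] at hx; simp only [mem_range]; omega
  · simp only [mem_range] at hx; simp only [mem_Icc] at hx'
    have : x = 0 := by omega
    rw [this, h0]

lemma sum_Icc2 {j : ℕ} (hj : 1 ≤ j) (f : ℕ → ℝ) (h0 : f 0 = 0) (hjj : f j = 0) :
    ∑ q ∈ range (j + 1), f q = ∑ q ∈ Icc 1 (j - 1), f q := by
  refine (Finset.sum_subset (fun x hx => ?_) (fun x hx hx' => ?_)).symm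
  · simp only [mem_Icc] at hx; simp only [mem_range]; omega
  · simp only [mem_range] at hx; simp only [mem_Icc] at hx'
    have : x = 0 ∨ x = j := by omega
    rcases this with h | h <;> rw [h] <;> assumption

section main
variable (ν : ℝ) (U : ℕ → ℕ → ℝ) (A B : ℕ → ℕ → ℕ → ℝ)
  (hA : ∀ i k : ℕ, A i 0 k = 0) (hB : ∀ i k : ℕ, B i 0 k = 0)

include hA hB

lemma case0 (i k : ℕ) : Eq3 ν U A B i 0 k ↔
    ((0 : ℝ) = ((k : ℝ) + 1) * U i (k + 1)
      + (∑ p ∈ Finset.range (i + 1), ∑ q ∈ Finset.range (k + 1),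
          ((i - p + 1 : ℕ) : ℝ) * U p q * U (i - p + 1) (k - q))
      + 2 * ν * A i 2 k) := by
  unfold Eq3
  simp only [dx, dy, dt, Uhat, hA, hB, Finset.sum_range_one, if_true, mul_zero, zero_mul,
    Finset.sum_const_zero, zero_add, add_zero, Nat.cast_zero]
  have hs : ∀ p ∈ range (i + 1), ∀ q ∈ range (k + 1),
      U p q * ((((i - p : ℕ) : ℝ) + 1) * U (i - p + 1) (k - q))
      = ((i - p + 1 : ℕ) : ℝ) * U p q * U (i - p + 1) (k - q) := by
    intros; push_cast; ring
  rw [Finset.sum_congr rfl fun p hp => Finset.sum_congr rfl (hs p hp)]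
  norm_num
  constructor <;> intro h <;> linarith

lemma case1 (i k : ℕ) : Eq3 ν U A B i 1 k ↔
    (((k : ℝ) + 1) * A i 1 (k + 1)
      + (∑ p ∈ Finset.range (i + 1), ∑ r ∈ Finset.range (k + 1),
          B p 1 r * A (i - p) 1 (k - r)) =
      6 * ν * A i 3 k) := by
  unfold Eq3
  simp only [dx, dy, dt, Uhat, hA, hB, Finset.sum_range_succ, Finset.sum_range_one,
    if_true, if_false, one_ne_zero, mul_zero, zero_mul, Finset.sum_const_zero, zero_add,
    add_zero, Nat.cast_zero, Nat.cast_one, Nat.sub_self]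
  push_cast
  norm_num
  constructor <;> intro h <;> linear_combination h

lemma case2 (i k j : ℕ) (hj : 2 ≤ j) : Eq3 ν U A B i j k ↔
    (((k : ℝ) + 1) * A i j (k + 1)
      + (∑ p ∈ Finset.range (i + 1), ∑ q ∈ Finset.Icc 1 (j - 1),
          ∑ r ∈ Finset.range (k + 1),
          ((i - p + 1 : ℕ) : ℝ) * A p q r * A (i - p + 1) (j - q) (k - r))
      + (∑ p ∈ Finset.range (i + 1), ∑ q ∈ Finset.Icc 1 j,
          ∑ r ∈ Finset.range (k + 1),
          ((j - q + 1 : ℕ) : ℝ) * B p q r * A (i - p) (j - q + 1) (k - r)) =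
      ν * ((j : ℝ) + 1) * ((j : ℝ) + 2) * A i (j + 2) k) := by
  have hj0 : j ≠ 0 := by omega
  unfold Eq3
  -- the Uhat sum vanishes
  have hU : ∑ p ∈ range (i + 1), ∑ q ∈ range (j + 1), ∑ r ∈ range (k + 1),
      Uhat U p q r * dx (Uhat U) (i - p) (j - q) (k - r) = 0 := by
    refine Finset.sum_eq_zero fun p _ => Finset.sum_eq_zero fun q hq =>
      Finset.sum_eq_zero fun r _ => ?_
    by_cases hq0 : q = 0
    · subst hq0
      simp [Uhat, dx, hj0]
    · simp [Uhat, hq0]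
  rw [hU]
  -- first sum: restrict to Icc 1 (j-1)
  have h1 : ∀ p ∈ range (i + 1),
      ∑ q ∈ range (j + 1), ∑ r ∈ range (k + 1), A p q r * dx A (i - p) (j - q) (k - r)
      = ∑ q ∈ Finset.Icc 1 (j - 1), ∑ r ∈ range (k + 1),
          ((i - p + 1 : ℕ) : ℝ) * A p q r * A (i - p + 1) (j - q) (k - r) := by
    intro p _
    rw [sum_Icc2 (by omega)
      (f := fun q => ∑ r ∈ range (k + 1), A p q r * dx A (i - p) (j - q) (k - r))
      (by simp [hA]) (by simp [dx, Nat.sub_self, hA])]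
    refine Finset.sum_congr rfl fun q _ => Finset.sum_congr rfl fun r _ => ?_
    simp only [dx]; push_cast; ring
  rw [Finset.sum_congr rfl h1]
  -- second sum: restrict to Icc 1 j
  have h2 : ∀ p ∈ range (i + 1),
      ∑ q ∈ range (j + 1), ∑ r ∈ range (k + 1), B p q r * dy A (i - p) (j - q) (k - r)
      = ∑ q ∈ Finset.Icc 1 j, ∑ r ∈ range (k + 1),
          ((j - q + 1 : ℕ) : ℝ) * B p q r * A (i - p) (j - q + 1) (k - r) := by
    intro p _
    rw [sum_Icc1
      (f := fun q => ∑ r ∈ range (k + 1), B p q r * dy A (i - p) (j - q) (k - r))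
      (by simp [hB])]
    refine Finset.sum_congr rfl fun q _ => Finset.sum_congr rfl fun r _ => ?_
    simp only [dy]; push_cast; ring
  rw [Finset.sum_congr rfl h2]
  simp only [dt, dy, Uhat, hj0, if_false]
  push_cast
  norm_num
  constructor <;> intro h <;> linear_combination h

end main

theorem prandtl_momentum_iff (ν : ℝ) (U : ℕ → ℕ → ℝ) (A B : ℕ → ℕ → ℕ → ℝ)
    (hA : ∀ i k : ℕ, A i 0 k = 0) (hB : ∀ i k : ℕ, B i 0 k = 0) :
    (S A * S (dx A) + S B * S (dy A) + S (dt A) =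
        S (dt (Uhat U)) + S (Uhat U) * S (dx (Uhat U)) + ν • S (dy (dy A))) ↔
      ∀ i k : ℕ,
        ((0 : ℝ) = ((k : ℝ) + 1) * U i (k + 1)
            + (∑ p ∈ Finset.range (i + 1), ∑ q ∈ Finset.range (k + 1),
                ((i - p + 1 : ℕ) : ℝ) * U p q * U (i - p + 1) (k - q))
            + 2 * ν * A i 2 k) ∧
        (((k : ℝ) + 1) * A i 1 (k + 1)
            + (∑ p ∈ Finset.range (i + 1), ∑ r ∈ Finset.range (k + 1),
                B p 1 r * A (i - p) 1 (k - r)) =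
          6 * ν * A i 3 k) ∧
        (∀ j : ℕ, 2 ≤ j →
          ((k : ℝ) + 1) * A i j (k + 1)
            + (∑ p ∈ Finset.range (i + 1), ∑ q ∈ Finset.Icc 1 (j - 1),
                ∑ r ∈ Finset.range (k + 1),
                ((i - p + 1 : ℕ) : ℝ) * A p q r * A (i - p + 1) (j - q) (k - r))
            + (∑ p ∈ Finset.range (i + 1), ∑ q ∈ Finset.Icc 1 j,
                ∑ r ∈ Finset.range (k + 1),
                ((j - q + 1 : ℕ) : ℝ) * B p q r * A (i - p) (j - q + 1) (k - r)) =
          ν * ((j : ℝ) + 1) * ((j : ℝ) + 2) * A i (j + 2) k) := by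
  rw [series_iff]
  constructor
  · intro h i k
    exact ⟨(case0 ν U A B hA hB i k).mp (h i 0 k),
      (case1 ν U A B hA hB i k).mp (h i 1 k),
      fun j hj => (case2 ν U A B hA hB i k j hj).mp (h i j k)⟩
  · intro h i j k
    match j with
    | 0 => exact (case0 ν U A B hA hB i k).mpr (h i k).1
    | 1 => exact (case1 ν U A B hA hB i k).mpr (h i k).2.1
    | (j + 2) =>
      exact (case2 ν U A B hA hB i k (j + 2) (by omega)).mpr ((h i k).2.2 (j + 2) (by omega))
end

section
/- Fix ν ∈ ℝ with ν ≠ 0, a family U : ℕ² → ℝ of external-flow coefficients, and an arbitrary family a : ℕ² → ℝ. Then there exists exactly one pair of families A, B : ℕ³ → ℝ satisfying A(i,0,k) = B(i,0,k) = 0 and A(i,1,k) = a(i,k) for all i,k ∈ ℕ, such that u = S(A) and v = S(B) satisfy both Prandtl's boundary-layer momentum equation u·∂ₓu + v·∂_yu + ∂_tu = ∂_tS(Û) + S(Û)·∂ₓS(Û) + ν·∂_y∂_yu and the continuity equation ∂ₓu + ∂_yv = 0 in MvPowerSeries (Fin 3) ℝ. -/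
namespace PrandtlAux

noncomputable def mk3 (i j k : ℕ) : Fin 3 →₀ ℕ := Finsupp.equivFunOnFinite.symm ![i, j, k]

@[simp] lemma mk3_0 (i j k : ℕ) : mk3 i j k 0 = i := rfl
@[simp] lemma mk3_1 (i j k : ℕ) : mk3 i j k 1 = j := rfl
@[simp] lemma mk3_2 (i j k : ℕ) : mk3 i j k 2 = k := rfl

lemma mk3_eta (m : Fin 3 →₀ ℕ) : mk3 (m 0) (m 1) (m 2) = m := by
  ext x; fin_cases x <;> rfl

lemma coeff_S (A : ℕ → ℕ → ℕ → ℝ) (m : Fin 3 →₀ ℕ) :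
    (MvPowerSeries.coeff m) (S A) = A (m 0) (m 1) (m 2) := rfl

/-- Coefficient of a product of two series. -/
noncomputable def cv (P Q : ℕ → ℕ → ℕ → ℝ) (i j k : ℕ) : ℝ :=
  MvPowerSeries.coeff (mk3 i j k) (S P * S Q)

lemma cv_congr {P P' Q Q' : ℕ → ℕ → ℕ → ℝ} (j : ℕ)
    (hP : ∀ i j' k, j' ≤ j → P i j' k = P' i j' k)
    (hQ : ∀ i j' k, j' ≤ j → Q i j' k = Q' i j' k) (i k : ℕ) :
    cv P Q i j k = cv P' Q' i j k := by
  unfold cv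
  rw [MvPowerSeries.coeff_mul, MvPowerSeries.coeff_mul]
  apply Finset.sum_congr rfl
  intro p hp
  rw [Finset.HasAntidiagonal.mem_antidiagonal] at hp
  have h1 : p.1 1 + p.2 1 = j := by
    have := congrArg (fun f : Fin 3 →₀ ℕ => f 1) hp; simpa using this
  rw [coeff_S, coeff_S, coeff_S, coeff_S, hP _ _ _ (by omega), hQ _ _ _ (by omega)]

/-- The family `B` determined from `A` by the continuity equation. -/
noncomputable def Bof (A : ℕ → ℕ → ℕ → ℝ) : ℕ → ℕ → ℕ → ℝ :=
  fun i j k => if j = 0 then 0 else (-((i : ℝ) + 1) / (j : ℝ)) * A (i + 1) (j - 1) k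

lemma Bof_congr {A A' : ℕ → ℕ → ℕ → ℝ} (j : ℕ)
    (h : ∀ i j' k, j' ≤ j → A i j' k = A' i j' k) :
    ∀ i j' k, j' ≤ j → Bof A i j' k = Bof A' i j' k := by
  intro i j' k hj'
  cases j' with
  | zero => simp [Bof]
  | succ n => simp only [Bof, Nat.succ_ne_zero, if_false, Nat.add_sub_cancel,
      h (i + 1) n k (by omega)]

/-- The coefficient family of the right-hand side (known) part of the momentum equation. -/
noncomputable def Rc (U : ℕ → ℕ → ℝ) (i j k : ℕ) : ℝ :=
  dt (Uhat U) i j k + cv (Uhat U) (dx (Uhat U)) i j k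

/-- The coefficient-level momentum equation. -/
def Mc (ν : ℝ) (U : ℕ → ℕ → ℝ) (A B : ℕ → ℕ → ℕ → ℝ) : Prop :=
  ∀ i j k, cv A (dx A) i j k + cv B (dy A) i j k + dt A i j k
    = Rc U i j k + ν * dy (dy A) i j k

/-- The coefficient-level continuity equation. -/
def Cc (A B : ℕ → ℕ → ℕ → ℝ) : Prop :=
  ∀ i j k, dx A i j k + dy B i j k = 0

lemma momentum_iff (ν : ℝ) (U : ℕ → ℕ → ℝ) (A B : ℕ → ℕ → ℕ → ℝ) :
    (S A * S (dx A) + S B * S (dy A) + S (dt A) =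
      S (dt (Uhat U)) + S (Uhat U) * S (dx (Uhat U)) + ν • S (dy (dy A)))
    ↔ Mc ν U A B := by
  constructor
  · intro h i j k
    have h' := congrArg (MvPowerSeries.coeff (mk3 i j k)) h
    simp only [map_add, MvPowerSeries.coeff_smul, smul_eq_mul, coeff_S,
      mk3_0, mk3_1, mk3_2] at h'
    exact h'
  · intro h
    apply MvPowerSeries.ext; intro m
    have h' := h (m 0) (m 1) (m 2)
    unfold Mc Rc cv at h
    have h'' := h (m 0) (m 1) (m 2)
    rw [mk3_eta] at h''
    simp only [map_add, MvPowerSeries.coeff_smul, smul_eq_mul, coeff_S]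
    exact h''

lemma continuity_iff (A B : ℕ → ℕ → ℕ → ℝ) :
    (S (dx A) + S (dy B) = 0) ↔ Cc A B := by
  constructor
  · intro h i j k
    have h' := congrArg (MvPowerSeries.coeff (mk3 i j k)) h
    simpa only [map_add, map_zero, coeff_S, mk3_0, mk3_1, mk3_2] using h'
  · intro h
    apply MvPowerSeries.ext; intro m
    simpa only [map_add, map_zero, coeff_S] using h (m 0) (m 1) (m 2)

lemma Mc_solve {ν : ℝ} (hν : ν ≠ 0) {U : ℕ → ℕ → ℝ} {A B : ℕ → ℕ → ℕ → ℝ}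
    (h : Mc ν U A B) (i j k : ℕ) :
    A i (j + 2) k = (cv A (dx A) i j k + cv B (dy A) i j k + dt A i j k - Rc U i j k)
      / (ν * ((j : ℝ) + 1) * ((j : ℝ) + 2)) := by
  have hne : ν * ((j : ℝ) + 1) * ((j : ℝ) + 2) ≠ 0 := by
    refine mul_ne_zero (mul_ne_zero hν ?_) ?_ <;> positivity
  rw [eq_div_iff hne]
  have h' := h i j k
  simp only [dy] at h'
  push_cast at h'
  linear_combination -h'

lemma Cc_Bof (A : ℕ → ℕ → ℕ → ℝ) : Cc A (Bof A) := by
  intro i j k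
  have hj : ((j : ℝ) + 1) ≠ 0 := by positivity
  simp only [dx, dy, Bof, Nat.succ_ne_zero, if_false, Nat.add_sub_cancel]
  push_cast
  field_simp
  ring

section Construction

variable (ν : ℝ) (U a : ℕ → ℕ → ℝ)

/-- The value of the next y-level of coefficients determined from previous ones. -/
noncomputable def step (n : ℕ) (C : ℕ → ℕ → ℕ → ℝ) (i k : ℕ) : ℝ :=
  (cv C (dx C) i n k + cv (Bof C) (dy C) i n k + dt C i n k - Rc U i n k)
    / (ν * ((n : ℝ) + 1) * ((n : ℝ) + 2))

/-- `T n` agrees with the solution on all y-degrees `≤ n + 1`. -/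
noncomputable def T : ℕ → ℕ → ℕ → ℕ → ℝ
  | 0 => fun i j k => if j = 1 then a i k else 0
  | n + 1 => fun i j k => if j = n + 2 then step ν U n (T n) i k else T n i j k

/-- The solution family `A`. -/
noncomputable def A0 : ℕ → ℕ → ℕ → ℝ := fun i j k => T ν U a j i j k

lemma T_agree : ∀ n j, j ≤ n + 1 → ∀ i k, T ν U a n i j k = A0 ν U a i j k := by
  intro n
  induction n with
  | zero =>
    intro j hj i k
    interval_cases j
    · rfl
    · show T ν U a 0 i 1 k = T ν U a 1 i 1 k
      simp [T]
  | succ n ih =>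
    intro j hj i k
    rcases eq_or_lt_of_le hj with hj' | hj'
    · subst hj'
      show T ν U a (n + 1) i (n + 2) k = T ν U a (n + 2) i (n + 2) k
      simp [T]
    · have hne : j ≠ n + 2 := by omega
      have : T ν U a (n + 1) i j k = T ν U a n i j k := by simp [T, hne]
      rw [this, ih j (by omega)]

lemma A0_zero (i k : ℕ) : A0 ν U a i 0 k = 0 := rfl

lemma A0_one (i k : ℕ) : A0 ν U a i 1 k = a i k := by simp [A0, T]

lemma A0_step (i j k : ℕ) : A0 ν U a i (j + 2) k = step ν U j (T ν U a j) i k := by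
  show T ν U a (j + 2) i (j + 2) k = _
  simp [T]

lemma Mc_A0 (hν : ν ≠ 0) : Mc ν U (A0 ν U a) (Bof (A0 ν U a)) := by
  intro i j k
  have hagree : ∀ i' j' k', j' ≤ j + 1 → A0 ν U a i' j' k' = T ν U a j i' j' k' :=
    fun i' j' k' h => (T_agree ν U a j j' h i' k').symm
  have hag : ∀ i' j' k', j' ≤ j → A0 ν U a i' j' k' = T ν U a j i' j' k' :=
    fun i' j' k' h => hagree i' j' k' (by omega)
  have c1 : cv (A0 ν U a) (dx (A0 ν U a)) i j k = cv (T ν U a j) (dx (T ν U a j)) i j k := by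
    refine cv_congr j hag (fun i' j' k' h => ?_) i k
    simp only [dx, hag (i' + 1) j' k' h]
  have c2 : cv (Bof (A0 ν U a)) (dy (A0 ν U a)) i j k
      = cv (Bof (T ν U a j)) (dy (T ν U a j)) i j k := by
    refine cv_congr j (Bof_congr j hag) (fun i' j' k' h => ?_) i k
    simp only [dy, hagree i' (j' + 1) k' (by omega)]
  have c3 : dt (A0 ν U a) i j k = dt (T ν U a j) i j k := by
    simp only [dt, hag i j (k + 1) le_rfl]
  have hne : ν * ((j : ℝ) + 1) * ((j : ℝ) + 2) ≠ 0 := by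
    refine mul_ne_zero (mul_ne_zero hν ?_) ?_ <;> positivity
  have hstep := A0_step ν U a i j k
  rw [c1, c2, c3]
  have hdd : dy (dy (A0 ν U a)) i j k
      = ((j : ℝ) + 1) * (((j : ℝ) + 2) * step ν U j (T ν U a j) i k) := by
    simp only [dy, hstep]
    push_cast
    ring
  rw [hdd, step, eq_div_iff hne] at *
  rw [hdd]
  field_simp [step]
  ring

end Construction

end PrandtlAux

open PrandtlAux in
theorem prandtl_existsUnique (ν : ℝ) (hν : ν ≠ 0) (U : ℕ → ℕ → ℝ) (a : ℕ → ℕ → ℝ) :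
    ∃! AB : (ℕ → ℕ → ℕ → ℝ) × (ℕ → ℕ → ℕ → ℝ),
      (∀ i k : ℕ, AB.1 i 0 k = 0) ∧ (∀ i k : ℕ, AB.2 i 0 k = 0) ∧
      (∀ i k : ℕ, AB.1 i 1 k = a i k) ∧
      (S AB.1 * S (dx AB.1) + S AB.2 * S (dy AB.1) + S (dt AB.1) =
        S (dt (Uhat U)) + S (Uhat U) * S (dx (Uhat U)) + ν • S (dy (dy AB.1))) ∧
      (S (dx AB.1) + S (dy AB.2) = 0) := by
  classical
  refine ⟨(A0 ν U a, Bof (A0 ν U a)), ⟨fun i k => A0_zero ν U a i k,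
    fun i k => by simp [Bof], fun i k => A0_one ν U a i k,
    (momentum_iff ν U _ _).mpr (Mc_A0 ν U a hν),
    (continuity_iff _ _).mpr (Cc_Bof _)⟩, ?_⟩
  rintro ⟨A, B⟩ ⟨h1, h2, h3, h4, h5⟩
  have h1' : ∀ i k : ℕ, A i 0 k = 0 := h1
  have h2' : ∀ i k : ℕ, B i 0 k = 0 := h2
  have h3' : ∀ i k : ℕ, A i 1 k = a i k := h3
  have hM : Mc ν U A B := (momentum_iff ν U A B).mp h4
  have hC : Cc A B := (continuity_iff A B).mp h5
  -- B is determined by A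
  have hB : B = Bof A := by
    funext i j k
    cases j with
    | zero => rw [h2']; simp [Bof]
    | succ n =>
      have hc := hC i n k
      simp only [dx, dy] at hc
      have hn : ((n : ℝ) + 1) ≠ 0 := by positivity
      simp only [Bof, Nat.succ_ne_zero, if_false, Nat.add_sub_cancel]
      push_cast at hc ⊢
      field_simp
      linarith
  -- A is determined
  have hM0 : Mc ν U (A0 ν U a) (Bof (A0 ν U a)) := Mc_A0 ν U a hν
  have key : ∀ j i k, A i j k = A0 ν U a i j k := by
    intro j
    induction j using Nat.strong_induction_on with
    | _ j ih =>
      match j, ih with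
      | 0, _ => intro i k; rw [h1', A0_zero]
      | 1, _ => intro i k; rw [h3', A0_one]
      | n + 2, ih =>
        intro i k
        have hag : ∀ i' j' k', j' ≤ n + 1 → A i' j' k' = A0 ν U a i' j' k' :=
          fun i' j' k' h => ih j' (by omega) i' k'
        have hag' : ∀ i' j' k', j' ≤ n → A i' j' k' = A0 ν U a i' j' k' :=
          fun i' j' k' h => hag i' j' k' (by omega)
        rw [Mc_solve hν hM i n k, Mc_solve hν hM0 i n k]
        congr 1
        have c1 : cv A (dx A) i n k = cv (A0 ν U a) (dx (A0 ν U a)) i n k := by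
          refine cv_congr n hag' (fun i' j' k' h => ?_) i k
          simp only [dx, hag' (i' + 1) j' k' h]
        have c2 : cv B (dy A) i n k = cv (Bof (A0 ν U a)) (dy (A0 ν U a)) i n k := by
          rw [hB]
          refine cv_congr n (Bof_congr n hag') (fun i' j' k' h => ?_) i k
          simp only [dy, hag i' (j' + 1) k' (by omega)]
        have c3 : dt A i n k = dt (A0 ν U a) i n k := by
          simp only [dt, hag i n (k + 1) (by omega)]
        rw [c1, c2, c3]
  have hA : A = A0 ν U a := by funext i j k; exact key j i k
  subst hA
  rw [Prod.mk.injEq]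
  exact ⟨rfl, hB⟩
end
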